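/- Assume (φ1)–(φ3) and (V1)–(V5), and let q be the unique heteroclinic solution of problem (P). Then V is even on (−α,α) (i.e. V(−t) = V(t) for all t ∈ (−α,α)) if and only if q is odd (i.e. q(−t) = −q(t) for all t ∈ ℝ). -/

import Mathlib

open Real Filter Set MeasureTheory

noncomputable def Phi (φ : ℝ → ℝ) (t : ℝ) : ℝ := ∫ s in (0:ℝ)..|t|, s * φ s

def IsClassicalSolution (φ V q : ℝ → ℝ) : Prop :=
  Differentiable ℝ q ∧
  ∀ t : ℝ, HasDerivAt
    (fun s => if deriv q s = 0 then 0 else φ |deriv q s| * deriv q s)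
    (deriv V (q t)) t

def IsHeteroclinic (φ V : ℝ → ℝ) (α : ℝ) (q : ℝ → ℝ) : Prop :=
  IsClassicalSolution φ V q ∧ Differentiable ℝ (deriv q) ∧ Continuous (deriv q) ∧
  q 0 = 0 ∧ Tendsto q atTop (nhds α) ∧ Tendsto q atBot (nhds (-α))

noncomputable def gfun (φ : ℝ → ℝ) (x : ℝ) : ℝ := if x = 0 then 0 else φ |x| * x

noncomputable def hfun (φ : ℝ → ℝ) (s : ℝ) : ℝ := s * gfun φ s - Phi φ s

lemma gfun_neg (φ : ℝ → ℝ) (x : ℝ) : gfun φ (-x) = -gfun φ x := by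
  unfold gfun
  rcases eq_or_ne x 0 with h | h
  · simp [h]
  · rw [if_neg (neg_ne_zero.mpr h), if_neg h, abs_neg]; ring

lemma Phi_neg (φ : ℝ → ℝ) (x : ℝ) : Phi φ (-x) = Phi φ x := by unfold Phi; rw [abs_neg]

lemma Phi_abs (φ : ℝ → ℝ) (x : ℝ) : Phi φ |x| = Phi φ x := by unfold Phi; rw [abs_abs]

lemma Phi_zero (φ : ℝ → ℝ) : Phi φ 0 = 0 := by
  unfold Phi; rw [abs_zero, intervalIntegral.integral_same]

lemma hfun_neg (φ : ℝ → ℝ) (x : ℝ) : hfun φ (-x) = hfun φ x := by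
  unfold hfun; rw [gfun_neg, Phi_neg]; ring

lemma hfun_abs (φ : ℝ → ℝ) (x : ℝ) : hfun φ |x| = hfun φ x := by
  rcases abs_choice x with h | h <;> rw [h]
  exact hfun_neg φ x

lemma hfun_zero (φ : ℝ → ℝ) : hfun φ 0 = 0 := by
  unfold hfun; rw [Phi_zero]; ring

lemma hfun_pos_eq (φ : ℝ → ℝ) (s : ℝ) (hs : 0 < s) :
    hfun φ s = s * (φ s * s) - Phi φ s := by
  unfold hfun gfun
  rw [if_neg hs.ne', abs_of_pos hs]

section phiprops

variable {φ : ℝ → ℝ}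

lemma sphi_mono (hφC1 : ContDiffOn ℝ 1 φ (Set.Ioi 0))
    (hφ1 : ∀ t > 0, 0 < deriv (fun s => φ s * s) t) :
    ∀ u s : ℝ, 0 < u → u ≤ s → φ u * u ≤ φ s * s := by
  intro u s hu hus
  rcases eq_or_lt_of_le hus with rfl | h
  · exact le_refl _
  have hsub : Set.Icc u s ⊆ Set.Ioi 0 := fun x hx => lt_of_lt_of_le hu hx.1
  have hmono : StrictMonoOn (fun s => φ s * s) (Set.Icc u s) := by
    apply strictMonoOn_of_deriv_pos (convex_Icc u s)
    · exact ((hφC1.continuousOn.mono hsub).mul (continuousOn_id.mono hsub))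
    · intro x hx
      rw [interior_Icc] at hx
      exact hφ1 x (lt_trans hu hx.1)
  exact (hmono (Set.left_mem_Icc.2 hus) (Set.right_mem_Icc.2 hus) h).le

lemma sphi_integrable (hφC1 : ContDiffOn ℝ 1 φ (Set.Ioi 0))
    (hφpos : ∀ t > 0, 0 < φ t)
    (hφ1 : ∀ t > 0, 0 < deriv (fun s => φ s * s) t)
    {y : ℝ} (hy : 0 ≤ y) :
    IntervalIntegrable (fun s => s * φ s) MeasureTheory.volume 0 y := by
  apply MonotoneOn.intervalIntegrable
  rw [Set.uIcc_of_le hy]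
  intro a ha b hb hab
  rcases eq_or_lt_of_le ha.1 with rfl | ha'
  · simp only [zero_mul]
    rcases eq_or_lt_of_le hab with rfl | hb'
    · simp
    · exact (mul_pos hb' (hφpos b hb')).le
  · calc a * φ a = φ a * a := mul_comm _ _
      _ ≤ φ b * b := sphi_mono hφC1 hφ1 a b ha' hab
      _ = b * φ b := mul_comm _ _

lemma Phi_nonneg (hφpos : ∀ t > 0, 0 < φ t) (t : ℝ) : 0 ≤ Phi φ t := by
  unfold Phi
  apply intervalIntegral.integral_nonneg (abs_nonneg t)
  intro u hu
  rcases eq_or_lt_of_le hu.1 with rfl | hu'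
  · simp
  · exact (mul_pos hu' (hφpos u hu')).le

end phiprops

section phiprops
variable {φ : ℝ → ℝ} {c₁ c₂ δ₀ r : ℝ}

lemma Phi_eq_of_nonneg {y : ℝ} (hy : 0 ≤ y) :
    Phi φ y = ∫ s in (0:ℝ)..y, s * φ s := by
  unfold Phi; rw [abs_of_nonneg hy]

lemma Phi_le_rpow (hφC1 : ContDiffOn ℝ 1 φ (Set.Ioi 0))
    (hφpos : ∀ t > 0, 0 < φ t)
    (hφ1 : ∀ t > 0, 0 < deriv (fun s => φ s * s) t)
    (hc₂ : 0 < c₂) (hδ₀ : 0 < δ₀) (hr : 1 < r)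
    (hφ3 : ∀ t : ℝ, 0 < t → t ≤ δ₀ → φ t * t ≤ c₂ * t ^ (r - 1))
    {y : ℝ} (hy : 0 ≤ y) (hyδ : y ≤ δ₀) :
    Phi φ y ≤ c₂ * y ^ r / r := by
  have hr0 : (0:ℝ) < r := lt_trans one_pos hr
  have hr1 : (0:ℝ) < r - 1 := by linarith
  have hint2 : IntervalIntegrable (fun s : ℝ => c₂ * s ^ (r - 1)) MeasureTheory.volume 0 y :=
    (intervalIntegral.intervalIntegrable_rpow' (by linarith)).const_mul c₂
  have hmono : ∫ s in (0:ℝ)..y, s * φ s ≤ ∫ s in (0:ℝ)..y, c₂ * s ^ (r - 1) := by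
    apply intervalIntegral.integral_mono_on hy (sphi_integrable hφC1 hφpos hφ1 hy) hint2
    intro x hx
    rcases eq_or_lt_of_le hx.1 with rfl | hx'
    · rw [zero_mul, Real.zero_rpow (ne_of_gt hr1), mul_zero]
    · rw [mul_comm]
      exact hφ3 x hx' (le_trans hx.2 hyδ)
  have hval : ∫ s in (0:ℝ)..y, c₂ * s ^ (r - 1) = c₂ * y ^ r / r := by
    rw [intervalIntegral.integral_const_mul, integral_rpow (Or.inl (by linarith))]
    rw [sub_add_cancel, Real.zero_rpow (ne_of_gt hr0), sub_zero, mul_div_assoc]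
  rw [Phi_eq_of_nonneg hy]
  calc ∫ s in (0:ℝ)..y, s * φ s ≤ ∫ s in (0:ℝ)..y, c₂ * s ^ (r - 1) := hmono
    _ = c₂ * y ^ r / r := hval

lemma Phi_le_mul (hφC1 : ContDiffOn ℝ 1 φ (Set.Ioi 0))
    (hφpos : ∀ t > 0, 0 < φ t)
    (hφ1 : ∀ t > 0, 0 < deriv (fun s => φ s * s) t)
    {y : ℝ} (hy : 0 ≤ y) :
    Phi φ y ≤ y * (φ y * y) := by
  rcases eq_or_lt_of_le hy with rfl | hy'
  · rw [Phi_zero]; simp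
  have hmono : ∫ s in (0:ℝ)..y, s * φ s ≤ ∫ s in (0:ℝ)..y, φ y * y := by
    apply intervalIntegral.integral_mono_on hy (sphi_integrable hφC1 hφpos hφ1 hy)
      intervalIntegrable_const
    intro x hx
    rcases eq_or_lt_of_le hx.1 with rfl | hx'
    · rw [zero_mul]; exact (mul_pos (hφpos y hy') hy').le
    · rw [mul_comm]; exact sphi_mono hφC1 hφ1 x y hx' hx.2
  rw [Phi_eq_of_nonneg hy]
  calc ∫ s in (0:ℝ)..y, s * φ s ≤ ∫ s in (0:ℝ)..y, φ y * y := hmono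
    _ = y * (φ y * y) := by rw [intervalIntegral.integral_const, smul_eq_mul, sub_zero]

-- derivative of Phi at positive points
lemma Phi_hasDerivAt_pos (hφC1 : ContDiffOn ℝ 1 φ (Set.Ioi 0))
    (hφpos : ∀ t > 0, 0 < φ t)
    (hφ1 : ∀ t > 0, 0 < deriv (fun s => φ s * s) t)
    {x : ℝ} (hx : 0 < x) :
    HasDerivAt (Phi φ) (gfun φ x) x := by
  have hcont : ContinuousOn (fun s : ℝ => s * φ s) (Set.Ioi 0) :=
    continuousOn_id.mul hφC1.continuousOn
  have hF : HasDerivAt (fun u => ∫ s in (0:ℝ)..u, s * φ s) (x * φ x) x := by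
    apply intervalIntegral.integral_hasDerivAt_right
      (sphi_integrable hφC1 hφpos hφ1 hx.le)
      (hcont.stronglyMeasurableAtFilter isOpen_Ioi x hx)
      (hcont.continuousAt (isOpen_Ioi.mem_nhds hx))
  have hval : gfun φ x = x * φ x := by
    unfold gfun; rw [if_neg hx.ne', abs_of_pos hx]; ring
  rw [hval]
  apply hF.congr_of_eventuallyEq
  filter_upwards [isOpen_Ioi.mem_nhds hx] with y hy
  exact Phi_eq_of_nonneg (le_of_lt hy)

lemma Phi_hasDerivAt (hφC1 : ContDiffOn ℝ 1 φ (Set.Ioi 0))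
    (hφpos : ∀ t > 0, 0 < φ t)
    (hφ1 : ∀ t > 0, 0 < deriv (fun s => φ s * s) t)
    (hc₂ : 0 < c₂) (hδ₀ : 0 < δ₀) (hr : 1 < r)
    (hφ3 : ∀ t : ℝ, 0 < t → t ≤ δ₀ → φ t * t ≤ c₂ * t ^ (r - 1))
    (x : ℝ) :
    HasDerivAt (Phi φ) (gfun φ x) x := by
  rcases lt_trichotomy x 0 with hx | rfl | hx
  · have h1 : HasDerivAt (Phi φ) (gfun φ (-x)) (-x) :=
      Phi_hasDerivAt_pos hφC1 hφpos hφ1 (by linarith)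
    have h2 : HasDerivAt (fun y => Phi φ (-y)) (gfun φ (-x) * (-1)) x :=
      h1.comp x (hasDerivAt_neg x)
    have h3 : (fun y => Phi φ (-y)) = Phi φ := funext fun y => Phi_neg φ y
    rw [h3] at h2
    convert h2 using 1
    rw [gfun_neg]; ring
  · -- derivative at 0 is 0
    have hg0 : gfun φ 0 = 0 := by unfold gfun; simp
    rw [hg0]
    rw [hasDerivAt_iff_tendsto_slope]
    have hr1 : (0:ℝ) < r - 1 := by linarith
    apply squeeze_zero_norm' (a := fun y : ℝ => c₂ / r * |y| ^ (r - 1))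
    · filter_upwards [self_mem_nhdsWithin,
        eventually_nhdsWithin_of_eventually_nhds
          (Metric.eventually_nhds_iff.2 ⟨δ₀, hδ₀, fun {y} hy => hy⟩)] with y hy hyδ
      have hy0 : y ≠ 0 := hy
      have habs : (0:ℝ) < |y| := abs_pos.mpr hy0
      have hyd : |y| ≤ δ₀ := by
        have : dist y 0 < δ₀ := hyδ
        rw [Real.dist_eq, sub_zero] at this
        exact this.le
      have hP : Phi φ y ≤ c₂ * |y| ^ r / r := by
        rw [← Phi_abs]
        exact Phi_le_rpow hφC1 hφpos hφ1 hc₂ hδ₀ hr hφ3 (abs_nonneg y) hyd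
      have hPn : 0 ≤ Phi φ y := Phi_nonneg hφpos y
      have : ‖slope (Phi φ) 0 y‖ = Phi φ y / |y| := by
        rw [slope_def_field]
        rw [Phi_zero, sub_zero, sub_zero]
        rw [Real.norm_eq_abs, abs_div, abs_of_nonneg hPn]
      rw [this]
      rw [div_le_iff₀ habs]
      calc Phi φ y ≤ c₂ * |y| ^ r / r := hP
        _ = c₂ / r * |y| ^ (r - 1) * |y| := by
            rw [show r = r - 1 + 1 by ring, Real.rpow_add habs, Real.rpow_one]
            ring_nf
    · have h1 : Tendsto (fun y : ℝ => |y|) (nhds 0) (nhds 0) :=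
        continuous_abs.tendsto' 0 0 abs_zero
      have h2 : Tendsto (fun z : ℝ => z ^ (r - 1)) (nhds (0:ℝ)) (nhds 0) := by
        have := (Real.continuousAt_rpow_const 0 (r-1) (Or.inr hr1.le)).tendsto
        rwa [Real.zero_rpow (ne_of_gt hr1)] at this
      have h3 := (h2.comp h1).const_mul (c₂ / r)
      rw [mul_zero] at h3
      exact h3.mono_left nhdsWithin_le_nhds
  · exact Phi_hasDerivAt_pos hφC1 hφpos hφ1 hx
end phiprops


section hfunprops
variable {φ : ℝ → ℝ} {l c₁ c₂ δ₀ r : ℝ}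

lemma hfun_nonneg (hφC1 : ContDiffOn ℝ 1 φ (Set.Ioi 0))
    (hφpos : ∀ t > 0, 0 < φ t)
    (hφ1 : ∀ t > 0, 0 < deriv (fun s => φ s * s) t)
    {s : ℝ} (hs : 0 ≤ s) : 0 ≤ hfun φ s := by
  rcases eq_or_lt_of_le hs with rfl | hs'
  · rw [hfun_zero]
  · rw [hfun_pos_eq φ s hs']
    have := Phi_le_mul hφC1 hφpos hφ1 hs
    linarith

lemma hfun_hasDerivAt (hφC1 : ContDiffOn ℝ 1 φ (Set.Ioi 0))
    (hφpos : ∀ t > 0, 0 < φ t)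
    (hφ1 : ∀ t > 0, 0 < deriv (fun s => φ s * s) t)
    (hc₂ : 0 < c₂) (hδ₀ : 0 < δ₀) (hr : 1 < r)
    (hφ3 : ∀ t : ℝ, 0 < t → t ≤ δ₀ → φ t * t ≤ c₂ * t ^ (r - 1))
    {x : ℝ} (hx : 0 < x) :
    HasDerivAt (hfun φ) (x * deriv (fun s => φ s * s) x) x := by
  have hFd : DifferentiableOn ℝ (fun s => φ s * s) (Set.Ioi 0) :=
    (hφC1.mul contDiffOn_id).differentiableOn one_ne_zero
  have hFx : DifferentiableAt ℝ (fun s => φ s * s) x :=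
    (hFd x hx).differentiableAt (isOpen_Ioi.mem_nhds hx)
  have h1 : HasDerivAt (fun s : ℝ => s * (φ s * s))
      (1 * (φ x * x) + x * deriv (fun s => φ s * s) x) x :=
    (hasDerivAt_id x).mul hFx.hasDerivAt
  have h2 : HasDerivAt (fun s : ℝ => s * (φ s * s) - Phi φ s)
      (1 * (φ x * x) + x * deriv (fun s => φ s * s) x - gfun φ x) x :=
    h1.sub (Phi_hasDerivAt hφC1 hφpos hφ1 hc₂ hδ₀ hr hφ3 x)
  have heq : hfun φ =ᶠ[nhds x] fun s : ℝ => s * (φ s * s) - Phi φ s := by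
    filter_upwards [isOpen_Ioi.mem_nhds hx] with y hy
    exact hfun_pos_eq φ y hy
  have h3 := h2.congr_of_eventuallyEq heq
  refine h3.congr_deriv ?_
  have : gfun φ x = φ x * x := by unfold gfun; rw [if_neg hx.ne', abs_of_pos hx]
  rw [this]; ring

lemma hfun_sub_eq (hφC1 : ContDiffOn ℝ 1 φ (Set.Ioi 0))
    (hφpos : ∀ t > 0, 0 < φ t)
    (hφ1 : ∀ t > 0, 0 < deriv (fun s => φ s * s) t)
    (hc₂ : 0 < c₂) (hδ₀ : 0 < δ₀) (hr : 1 < r)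
    (hφ3 : ∀ t : ℝ, 0 < t → t ≤ δ₀ → φ t * t ≤ c₂ * t ^ (r - 1))
    {u s : ℝ} (hu : 0 < u) (hus : u ≤ s) :
    hfun φ s - hfun φ u = ∫ t in u..s, t * deriv (fun z => φ z * z) t := by
  have hsub : Set.uIcc u s ⊆ Set.Ioi 0 := by
    rw [Set.uIcc_of_le hus]
    exact fun x hx => lt_of_lt_of_le hu hx.1
  have hder : ContinuousOn (deriv (fun z => φ z * z)) (Set.Ioi 0) :=
    ((hφC1.mul contDiffOn_id).continuousOn_deriv_of_isOpen isOpen_Ioi le_rfl)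
  have hcont : ContinuousOn (fun t => t * deriv (fun z => φ z * z) t) (Set.Ioi 0) :=
    continuousOn_id.mul hder
  rw [intervalIntegral.integral_eq_sub_of_hasDerivAt
    (fun x hx => hfun_hasDerivAt hφC1 hφpos hφ1 hc₂ hδ₀ hr hφ3 (hsub hx))
    ((hcont.mono hsub).intervalIntegrable)]

lemma hfun_deriv_lb (hφC1 : ContDiffOn ℝ 1 φ (Set.Ioi 0))
    (hφpos : ∀ t > 0, 0 < φ t)
    (hl : 1 < l)
    (hφ2 : ∀ t > 0, l - 1 ≤ deriv (fun s => φ s * s) t / φ t)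
    {t : ℝ} (ht : 0 < t) :
    (l - 1) * (φ t * t) ≤ t * deriv (fun s => φ s * s) t := by
  have hφt := hφpos t ht
  have h := hφ2 t ht
  rw [le_div_iff₀ hφt] at h
  nlinarith

lemma hfun_lower (hφC1 : ContDiffOn ℝ 1 φ (Set.Ioi 0))
    (hφpos : ∀ t > 0, 0 < φ t)
    (hφ1 : ∀ t > 0, 0 < deriv (fun s => φ s * s) t)
    (hl : 1 < l)
    (hφ2 : ∀ t > 0, l - 1 ≤ deriv (fun s => φ s * s) t / φ t)
    (hc₁ : 0 < c₁) (hc₂ : 0 < c₂) (hδ₀ : 0 < δ₀) (hr : 1 < r)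
    (hφ3 : ∀ t : ℝ, 0 < t → t ≤ δ₀ → c₁ * t ^ (r - 1) ≤ φ t * t ∧ φ t * t ≤ c₂ * t ^ (r - 1))
    {s : ℝ} (hs : 0 ≤ s) (hsδ : s ≤ δ₀) :
    (l - 1) * c₁ / r * s ^ r ≤ hfun φ s := by
  have hr0 : (0:ℝ) < r := lt_trans one_pos hr
  rcases eq_or_lt_of_le hs with rfl | hs'
  · rw [hfun_zero, Real.zero_rpow (ne_of_gt hr0), mul_zero]
  -- for every ε in (0, s]
  have key : ∀ ε : ℝ, 0 < ε → ε ≤ s → (l - 1) * c₁ * (s ^ r - ε ^ r) / r ≤ hfun φ s := by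
    intro ε hε hεs
    have hIsub : Set.Icc ε s ⊆ Set.Ioi 0 := fun x hx => lt_of_lt_of_le hε hx.1
    have hmono : ∫ t in ε..s, (l-1) * c₁ * t ^ (r-1) ≤
        ∫ t in ε..s, t * deriv (fun z => φ z * z) t := by
      apply intervalIntegral.integral_mono_on hεs
      · exact (intervalIntegral.intervalIntegrable_rpow' (by linarith)).const_mul _
      · have hder : ContinuousOn (deriv (fun z => φ z * z)) (Set.Ioi 0) :=
          ((hφC1.mul contDiffOn_id).continuousOn_deriv_of_isOpen isOpen_Ioi le_rfl)
        have hcont : ContinuousOn (fun t => t * deriv (fun z => φ z * z) t) (Set.Ioi 0) :=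
          continuousOn_id.mul hder
        apply ContinuousOn.intervalIntegrable
        rw [Set.uIcc_of_le hεs]
        exact hcont.mono hIsub
      · intro x hx
        have hx0 : 0 < x := lt_of_lt_of_le hε hx.1
        have h1 := hfun_deriv_lb hφC1 hφpos hl hφ2 hx0
        have h2 := (hφ3 x hx0 (le_trans hx.2 hsδ)).1
        have hl1 : (0:ℝ) ≤ l - 1 := by linarith
        calc (l-1) * c₁ * x ^ (r-1) = (l-1) * (c₁ * x ^ (r-1)) := by ring
          _ ≤ (l-1) * (φ x * x) := by
              apply mul_le_mul_of_nonneg_left h2 hl1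
          _ ≤ x * deriv (fun z => φ z * z) x := h1
    have hval : ∫ t in ε..s, (l-1) * c₁ * t ^ (r-1) = (l-1) * c₁ * (s ^ r - ε ^ r) / r := by
      rw [intervalIntegral.integral_const_mul, integral_rpow (Or.inl (by linarith))]
      rw [sub_add_cancel]
      ring
    have hFTC := hfun_sub_eq hφC1 hφpos hφ1 hc₂ hδ₀ hr
      (fun t ht1 ht2 => (hφ3 t ht1 ht2).2) hε hεs
    have hεnn := hfun_nonneg hφC1 hφpos hφ1 hε.le
    rw [hval] at hmono
    linarith
  -- limit ε → 0⁺
  have hlim : Tendsto (fun ε : ℝ => (l - 1) * c₁ * (s ^ r - ε ^ r) / r)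
      (nhdsWithin 0 (Set.Ioi 0)) (nhds ((l - 1) * c₁ * (s ^ r - 0) / r)) := by
    apply Tendsto.mono_left _ nhdsWithin_le_nhds
    have h2 : Tendsto (fun ε : ℝ => ε ^ r) (nhds (0:ℝ)) (nhds 0) := by
      have := (Real.continuousAt_rpow_const 0 r (Or.inr hr0.le)).tendsto
      rwa [Real.zero_rpow (ne_of_gt hr0)] at this
    exact ((tendsto_const_nhds.sub h2).const_mul _).div_const _
  have hev : ∀ᶠ ε in nhdsWithin (0:ℝ) (Set.Ioi 0),
      (l - 1) * c₁ * (s ^ r - ε ^ r) / r ≤ hfun φ s := by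
    filter_upwards [self_mem_nhdsWithin, Ioo_mem_nhdsGT_of_mem (Set.left_mem_Ico.2 hs')]
      with ε hε1 hε2
    exact key ε hε1 hε2.2.le
  have := le_of_tendsto hlim hev
  calc (l-1) * c₁ / r * s ^ r = (l-1) * c₁ * (s ^ r - 0) / r := by ring
    _ ≤ hfun φ s := this

lemma hfun_pos (hφC1 : ContDiffOn ℝ 1 φ (Set.Ioi 0))
    (hφpos : ∀ t > 0, 0 < φ t)
    (hφ1 : ∀ t > 0, 0 < deriv (fun s => φ s * s) t)
    (hl : 1 < l)
    (hφ2 : ∀ t > 0, l - 1 ≤ deriv (fun s => φ s * s) t / φ t)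
    (hc₁ : 0 < c₁) (hc₂ : 0 < c₂) (hδ₀ : 0 < δ₀) (hr : 1 < r)
    (hφ3 : ∀ t : ℝ, 0 < t → t ≤ δ₀ → c₁ * t ^ (r - 1) ≤ φ t * t ∧ φ t * t ≤ c₂ * t ^ (r - 1))
    {s : ℝ} (hs : 0 < s) : 0 < hfun φ s := by
  have hC₀ : 0 < (l - 1) * c₁ / r := by
    apply div_pos (mul_pos (by linarith) hc₁) (by linarith)
  rcases le_or_gt s δ₀ with h | h
  · calc (0:ℝ) < (l - 1) * c₁ / r * s ^ r :=
        mul_pos hC₀ (Real.rpow_pos_of_pos hs r)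
      _ ≤ hfun φ s := hfun_lower hφC1 hφpos hφ1 hl hφ2 hc₁ hc₂ hδ₀ hr hφ3 hs.le h
  · have h1 : (0:ℝ) < (l - 1) * c₁ / r * δ₀ ^ r :=
      mul_pos hC₀ (Real.rpow_pos_of_pos hδ₀ r)
    have h2 := hfun_lower hφC1 hφpos hφ1 hl hφ2 hc₁ hc₂ hδ₀ hr hφ3 hδ₀.le le_rfl
    have h3 := hfun_sub_eq hφC1 hφpos hφ1 hc₂ hδ₀ hr
      (fun t ht1 ht2 => (hφ3 t ht1 ht2).2) hδ₀ h.le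
    have h4 : 0 ≤ ∫ t in δ₀..s, t * deriv (fun z => φ z * z) t := by
      apply intervalIntegral.integral_nonneg h.le
      intro x hx
      have hx0 : 0 < x := lt_of_lt_of_le hδ₀ hx.1
      exact (mul_pos hx0 (hφ1 x hx0)).le
    linarith

lemma my_deriv_comp_neg (u : ℝ → ℝ) (t : ℝ) :
    deriv (fun s => u (-s)) t = - deriv u (-t) := by
  rcases em (DifferentiableAt ℝ u (-t)) with h | h
  · have h1 : HasDerivAt (fun s => u (-s)) (deriv u (-t) * (-1)) t :=
      h.hasDerivAt.comp t (hasDerivAt_neg t)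
    rw [h1.deriv]; ring
  · have h2 : ¬ DifferentiableAt ℝ (fun s => u (-s)) t := by
      intro hc
      apply h
      have hc' : DifferentiableAt ℝ (fun s => u (-s)) (-(-t)) := by rwa [neg_neg]
      have h3 := DifferentiableAt.comp (𝕜 := ℝ) (-t) hc' (differentiable_neg (-t))
      have heq : ((fun s => u (-s)) ∘ Neg.neg) = u := by
        funext s; simp [Function.comp]
      rwa [heq] at h3
    rw [deriv_zero_of_not_differentiableAt h, deriv_zero_of_not_differentiableAt h2, neg_zero]

lemma energy_const {φ V q : ℝ → ℝ} {c₂ δ₀ r : ℝ}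
    (hφC1 : ContDiffOn ℝ 1 φ (Set.Ioi 0))
    (hφpos : ∀ t > 0, 0 < φ t)
    (hφ1 : ∀ t > 0, 0 < deriv (fun s => φ s * s) t)
    (hc₂ : 0 < c₂) (hδ₀ : 0 < δ₀) (hr : 1 < r)
    (hφ3 : ∀ t : ℝ, 0 < t → t ≤ δ₀ → φ t * t ≤ c₂ * t ^ (r - 1))
    (hV1 : ContDiff ℝ 1 V)
    (hsol : IsClassicalSolution φ V q)
    (hq2 : Differentiable ℝ (deriv q)) :
    ∀ t : ℝ, hfun φ (deriv q t) - V (q t) = hfun φ (deriv q 0) - V (q 0) := by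
  set E : ℝ → ℝ := fun t => hfun φ (deriv q t) - V (q t) with hE
  have hVd : Differentiable ℝ V := hV1.differentiable one_ne_zero
  have hDer : ∀ t, HasDerivAt E 0 t := by
    intro t
    have h1 : HasDerivAt (deriv q) (deriv (deriv q) t) t := (hq2 t).hasDerivAt
    have h2 : HasDerivAt (fun s => gfun φ (deriv q s)) (deriv V (q t)) t := hsol.2 t
    have h3 : HasDerivAt (fun s => deriv q s * gfun φ (deriv q s))
        (deriv (deriv q) t * gfun φ (deriv q t) + deriv q t * deriv V (q t)) t := h1.mul h2
    have h4 : HasDerivAt (fun s => Phi φ (deriv q s))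
        (gfun φ (deriv q t) * deriv (deriv q) t) t :=
      (Phi_hasDerivAt hφC1 hφpos hφ1 hc₂ hδ₀ hr hφ3 (deriv q t)).comp t h1
    have h5 : HasDerivAt (fun s => V (q s)) (deriv V (q t) * deriv q t) t :=
      (hVd (q t)).hasDerivAt.comp t (hsol.1 t).hasDerivAt
    have h6 : HasDerivAt E
        (deriv (deriv q) t * gfun φ (deriv q t) + deriv q t * deriv V (q t)
          - gfun φ (deriv q t) * deriv (deriv q) t - (deriv V (q t) * deriv q t)) t :=
      (h3.sub h4).sub h5
    convert h6 using 1
    ring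
  intro t
  exact is_const_of_deriv_eq_zero (fun x => (hDer x).differentiableAt)
    (fun x => (hDer x).deriv) t 0

lemma no_touch {φ W : ℝ → ℝ} {α δ a c₂ δ₀ r C₀ : ℝ}
    (hα : 0 < α) (ha : 0 < a) (hδ : 0 < δ)
    (hc₂ : 0 < c₂) (hδ₀ : 0 < δ₀) (hr : 1 < r) (hC₀ : 0 < C₀)
    (hPhi_le : ∀ y : ℝ, 0 ≤ y → y ≤ δ₀ → Phi φ y ≤ c₂ * y ^ r / r)
    (hhlow : ∀ s : ℝ, 0 ≤ s → s ≤ δ₀ → C₀ * s ^ r ≤ hfun φ s)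
    (hhpos : ∀ s : ℝ, 0 < s → 0 < hfun φ s)
    {u : ℝ → ℝ} (hu : Differentiable ℝ u) (hu' : Continuous (deriv u))
    (hWu : ∀ t, hfun φ (deriv u t) = W (u t))
    (hWα : W α = 0)
    (hWle : ∀ x : ℝ, α - δ < x → x ≤ α → W x ≤ a * Phi φ (α - x))
    (hu0 : u 0 = 0)
    {t₀ : ℝ} (ht₀ : 0 < t₀) (hut₀ : α ≤ u t₀) : False := by
  have hrpos : (0:ℝ) < r := lt_trans one_pos hr
  have ucont : Continuous u := hu.continuous
  set S : Set ℝ := Set.Icc 0 t₀ ∩ u ⁻¹' {α} with hS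
  have hSclosed : IsClosed S := isClosed_Icc.inter (isClosed_singleton.preimage ucont)
  have hSne : S.Nonempty := by
    have hIcc : α ∈ Set.Icc (u 0) (u t₀) := by rw [hu0]; exact ⟨hα.le, hut₀⟩
    obtain ⟨t, htI, hta⟩ := intermediate_value_Icc ht₀.le ucont.continuousOn hIcc
    exact ⟨t, htI, hta⟩
  have hSbdd : BddBelow S := ⟨0, fun x hx => hx.1.1⟩
  set t₁ := sInf S with ht₁def
  have ht₁S : t₁ ∈ S := hSclosed.csInf_mem hSne hSbdd
  have hut₁ : u t₁ = α := ht₁S.2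
  have ht₁0 : 0 < t₁ := by
    rcases eq_or_lt_of_le ht₁S.1.1 with h0 | h0
    · exfalso; rw [← h0, hu0] at hut₁; linarith
    · exact h0
  have hlt : ∀ t, 0 ≤ t → t < t₁ → u t < α := by
    intro t ht0 htt
    by_contra hc
    push_neg at hc
    have hIcc : α ∈ Set.Icc (u 0) (u t) := by rw [hu0]; exact ⟨hα.le, hc⟩
    obtain ⟨s, hsI, hsa⟩ := intermediate_value_Icc ht0 ucont.continuousOn hIcc
    have hsS : s ∈ S := ⟨⟨hsI.1, le_trans hsI.2 (le_trans htt.le ht₁S.1.2)⟩, hsa⟩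
    have := csInf_le hSbdd hsS
    rw [← ht₁def] at this
    linarith [hsI.2]
  have hu'₁ : deriv u t₁ = 0 := by
    by_contra hne
    have h1 : 0 < |deriv u t₁| := abs_pos.mpr hne
    have h2 := hhpos _ h1
    rw [hfun_abs, hWu t₁, hut₁, hWα] at h2
    exact lt_irrefl 0 h2
  -- choose ε
  have hmin : 0 < min δ δ₀ := lt_min hδ hδ₀
  obtain ⟨ε₁, hε₁pos, hε₁⟩ := Metric.continuousAt_iff.1 ucont.continuousAt (min δ δ₀) hmin
  obtain ⟨ε₂, hε₂pos, hε₂⟩ := Metric.continuousAt_iff.1 hu'.continuousAt δ₀ hδ₀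
  set ε : ℝ := min (min ε₁ ε₂ / 2) t₁ with hεdef
  have hεpos : 0 < ε := lt_min (by positivity) ht₁0
  have hεle : ε ≤ t₁ := min_le_right _ _
  set I : Set ℝ := Set.Icc (t₁ - ε) t₁ with hIdef
  have hdist : ∀ t ∈ I, dist t t₁ < min ε₁ ε₂ := by
    intro t ht
    rw [Real.dist_eq, abs_of_nonpos (by linarith [ht.2])]
    have h1 : ε ≤ min ε₁ ε₂ / 2 := min_le_left _ _
    have h2 : 0 < min ε₁ ε₂ := lt_min hε₁pos hε₂pos
    have := ht.1
    linarith
  have hyd : ∀ t ∈ I, |u t - α| < min δ δ₀ := by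
    intro t ht
    have := hε₁ (lt_of_lt_of_le (hdist t ht) (min_le_left _ _))
    rwa [Real.dist_eq, hut₁] at this
  have hud : ∀ t ∈ I, |deriv u t| < δ₀ := by
    intro t ht
    have := hε₂ (lt_of_lt_of_le (hdist t ht) (min_le_right _ _))
    rwa [Real.dist_eq, hu'₁, sub_zero] at this
  have hle : ∀ t ∈ I, u t ≤ α := by
    intro t ht
    rcases eq_or_lt_of_le ht.2 with rfl | h
    · exact le_of_eq hut₁
    · exact (hlt t (by linarith [ht.1]) h).le
  set B : ℝ := a * c₂ / (r * C₀) with hBdef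
  have hB : 0 < B := div_pos (mul_pos ha hc₂) (mul_pos hrpos hC₀)
  set K : ℝ := B ^ r⁻¹ with hKdef
  have hK : 0 < K := Real.rpow_pos_of_pos hB _
  have hbound : ∀ t ∈ I, |deriv u t| ≤ K * (α - u t) := by
    intro t ht
    have hy0 : 0 ≤ α - u t := by linarith [hle t ht]
    have habs : |u t - α| = α - u t := by rw [abs_sub_comm, abs_of_nonneg hy0]
    have hyδ : α - u t ≤ δ₀ := by
      have := hyd t ht; rw [habs] at this
      exact this.le.trans (min_le_right _ _)
    have hyδ' : α - u t < δ := by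
      have := hyd t ht; rw [habs] at this
      exact lt_of_lt_of_le this (min_le_left _ _)
    have h1 : C₀ * |deriv u t| ^ r ≤ W (u t) := by
      have := hhlow _ (abs_nonneg (deriv u t)) (hud t ht).le
      rwa [hfun_abs, hWu t] at this
    have h2 : W (u t) ≤ a * Phi φ (α - u t) := hWle (u t) (by linarith) (hle t ht)
    have h3 : Phi φ (α - u t) ≤ c₂ * (α - u t) ^ r / r := hPhi_le _ hy0 hyδ
    have h4 : |deriv u t| ^ r ≤ B * (α - u t) ^ r := by
      have h5 : C₀ * |deriv u t| ^ r ≤ a * (c₂ * (α - u t) ^ r / r) := by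
        calc C₀ * |deriv u t| ^ r ≤ W (u t) := h1
          _ ≤ a * Phi φ (α - u t) := h2
          _ ≤ a * (c₂ * (α - u t) ^ r / r) := mul_le_mul_of_nonneg_left h3 ha.le
      rw [← le_div_iff₀' hC₀] at h5
      have h6 : a * (c₂ * (α - u t) ^ r / r) / C₀ = B * (α - u t) ^ r := by
        rw [hBdef]; field_simp
      rwa [h6] at h5
    have hXnn := abs_nonneg (deriv u t)
    have h5 : (|deriv u t| ^ r) ^ r⁻¹ ≤ (B * (α - u t) ^ r) ^ r⁻¹ :=
      Real.rpow_le_rpow (Real.rpow_nonneg hXnn r) h4 (inv_nonneg.2 hrpos.le)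
    rw [← Real.rpow_mul hXnn, mul_inv_cancel₀ (ne_of_gt hrpos), Real.rpow_one] at h5
    rw [Real.mul_rpow hB.le (Real.rpow_nonneg hy0 r), ← Real.rpow_mul hy0,
      mul_inv_cancel₀ (ne_of_gt hrpos), Real.rpow_one] at h5
    exact h5
  -- Gronwall
  set f : ℝ → ℝ := fun t => (α - u t) * Real.exp (K * t) with hfdef
  have hfd : ∀ t : ℝ, HasDerivAt f
      (-(deriv u t) * Real.exp (K * t) + (α - u t) * (Real.exp (K * t) * K)) t := by
    intro t
    have h1 : HasDerivAt (fun t : ℝ => α - u t) (-(deriv u t)) t := by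
      have := (hasDerivAt_const t α).sub (hu t).hasDerivAt
      rw [zero_sub] at this; exact this
    have h2 : HasDerivAt (fun t : ℝ => Real.exp (K * t)) (Real.exp (K * t) * K) t := by
      have h3 : HasDerivAt (fun t : ℝ => K * t) K t := by
        simpa using (hasDerivAt_id t).const_mul K
      exact (Real.hasDerivAt_exp (K * t)).comp t h3
    exact h1.mul h2
  have hmono : MonotoneOn f I := by
    apply monotoneOn_of_deriv_nonneg (convex_Icc _ _)
    · have : Continuous f :=
        (continuous_const.sub ucont).mul
          (Real.continuous_exp.comp (continuous_const.mul continuous_id))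
      exact this.continuousOn
    · intro x hx
      exact (hfd x).differentiableAt.differentiableWithinAt
    · intro x hx
      rw [interior_Icc] at hx
      have hxI : x ∈ I := ⟨hx.1.le, hx.2.le⟩
      rw [(hfd x).deriv]
      have hkey : deriv u x ≤ K * (α - u x) := by
        have h1 := hbound x hxI
        have h2 := le_abs_self (deriv u x)
        linarith
      have hexp := (Real.exp_pos (K * x)).le
      nlinarith [mul_le_mul_of_nonneg_right hkey hexp]
  have hmem1 : t₁ - ε ∈ I := ⟨le_refl _, by linarith⟩
  have hmem2 : t₁ ∈ I := ⟨by linarith, le_refl _⟩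
  have hf1 : f (t₁ - ε) ≤ f t₁ := hmono hmem1 hmem2 (by linarith)
  have hft₁ : f t₁ = 0 := by rw [hfdef]; simp [hut₁]
  have hflt : 0 < f (t₁ - ε) := by
    have h1 : u (t₁ - ε) < α := hlt _ (by linarith) (by linarith)
    exact mul_pos (by linarith) (Real.exp_pos _)
  rw [hft₁] at hf1
  linarith

lemma no_touch' {φ W : ℝ → ℝ} {α δ a c₂ δ₀ r C₀ : ℝ}
    (hα : 0 < α) (ha : 0 < a) (hδ : 0 < δ)
    (hc₂ : 0 < c₂) (hδ₀ : 0 < δ₀) (hr : 1 < r) (hC₀ : 0 < C₀)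
    (hPhi_le : ∀ y : ℝ, 0 ≤ y → y ≤ δ₀ → Phi φ y ≤ c₂ * y ^ r / r)
    (hhlow : ∀ s : ℝ, 0 ≤ s → s ≤ δ₀ → C₀ * s ^ r ≤ hfun φ s)
    (hhpos : ∀ s : ℝ, 0 < s → 0 < hfun φ s)
    {u : ℝ → ℝ} (hu : Differentiable ℝ u) (hu' : Continuous (deriv u))
    (hWu : ∀ t, hfun φ (deriv u t) = W (u t))
    (hWα : W α = 0)
    (hWle : ∀ x : ℝ, α - δ < x → x ≤ α → W x ≤ a * Phi φ (α - x))
    (hu0 : u 0 = 0)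
    {t₀ : ℝ} (ht₀ : t₀ ≠ 0) (hut₀ : α ≤ u t₀) : False := by
  rcases lt_or_gt_of_ne ht₀ with h | h
  · -- reflect time
    set v : ℝ → ℝ := fun t => u (-t) with hvdef
    have hv : Differentiable ℝ v := hu.comp (differentiable_neg)
    have hvd : ∀ t, deriv v t = - deriv u (-t) := fun t => my_deriv_comp_neg u t
    have hvd' : deriv v = fun t => - deriv u (-t) := funext hvd
    have hv' : Continuous (deriv v) := by
      rw [hvd']
      exact (hu'.comp continuous_neg).neg
    apply no_touch hα ha hδ hc₂ hδ₀ hr hC₀ hPhi_le hhlow hhpos hv hv'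
      (fun t => by rw [hvd t, hfun_neg]; exact hWu (-t)) hWα hWle
      (by rw [hvdef]; simp [hu0]) (t₀ := -t₀) (by linarith) (by rw [hvdef]; simpa using hut₀)
  · exact no_touch hα ha hδ hc₂ hδ₀ hr hC₀ hPhi_le hhlow hhpos hu hu'
      hWu hWα hWle hu0 h hut₀

lemma attain_max {q : ℝ → ℝ} {a b θ : ℝ} (hcont : Continuous q)
    (htop : Tendsto q atTop (nhds a)) (hbot : Tendsto q atBot (nhds b))
    {t₀ : ℝ} (hθ : θ = q t₀) (haa : a ≤ θ) (hb : b ≤ θ) :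
    ∃ tm, θ ≤ q tm ∧ ∀ s, q s ≤ q tm := by
  by_cases hall : ∀ s, q s ≤ θ
  · exact ⟨t₀, le_of_eq hθ, fun s => hθ ▸ hall s⟩
  · push_neg at hall
    obtain ⟨t₂, ht₂⟩ := hall
    set mid := (θ + q t₂) / 2 with hmid
    have hmid1 : θ < mid := by rw [hmid]; linarith
    have hmid2 : mid < q t₂ := by rw [hmid]; linarith
    have hevT : ∀ᶠ t in atTop, q t < mid :=
      htop.eventually (eventually_lt_nhds (by linarith))
    have hevB : ∀ᶠ t in atBot, q t < mid :=
      hbot.eventually (eventually_lt_nhds (by linarith))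
    obtain ⟨T₁, hT₁⟩ := hevT.exists_forall_of_atTop
    obtain ⟨T₂, hT₂⟩ := hevB.exists_forall_of_atBot
    set lo := min T₂ t₂ with hlo
    set hi := max T₁ t₂ with hhi
    have hlohi : lo ≤ hi := le_trans (min_le_right _ _) (le_max_right _ _)
    have ht₂mem : t₂ ∈ Set.Icc lo hi := ⟨min_le_right _ _, le_max_right _ _⟩
    obtain ⟨tm, htmmem, htm⟩ := (isCompact_Icc (a := lo) (b := hi)).exists_isMaxOn
      ⟨t₂, ht₂mem⟩ hcont.continuousOn
    refine ⟨tm, ?_, ?_⟩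
    · have : θ < q t₂ := ht₂
      have h2 : q t₂ ≤ q tm := htm ht₂mem
      linarith
    · intro s
      by_cases hs : s ∈ Set.Icc lo hi
      · exact htm hs
      · have hqs : q s < mid := by
          rcases lt_or_ge s lo with h1 | h1
          · exact hT₂ s (le_trans h1.le (min_le_left _ _))
          · have h2 : hi < s := by
              by_contra hc
              push_neg at hc
              exact hs ⟨h1, hc⟩
            exact hT₁ s (le_trans (le_max_left _ _) h2.le)
        calc q s ≤ q t₂ := by linarith
          _ ≤ q tm := htm ht₂mem


theorem statement17 (φ V : ℝ → ℝ) (l m α : ℝ) (q : ℝ → ℝ)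
    (hφC1 : ContDiffOn ℝ 1 φ (Set.Ioi 0))
    (hφpos : ∀ t > 0, 0 < φ t)
    (hφ1 : ∀ t > 0, 0 < deriv (fun s => φ s * s) t)
    (hl : 1 < l) (hlm : l ≤ m)
    (hφ2 : ∀ t > 0, l - 1 ≤ deriv (fun s => φ s * s) t / φ t ∧
      deriv (fun s => φ s * s) t / φ t ≤ m - 1)
    (hφ3 : ∃ c₁ c₂ δ₀ r : ℝ, 0 < c₁ ∧ 0 < c₂ ∧ 0 < δ₀ ∧ 1 < r ∧
      ∀ t : ℝ, 0 < t → t ≤ δ₀ → c₁ * t ^ (r - 1) ≤ φ t * t ∧ φ t * t ≤ c₂ * t ^ (r - 1))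
    (hα : 0 < α)
    (hV1 : ContDiff ℝ 1 V) (hVnn : ∀ t, 0 ≤ V t)
    (hV2 : V α = 0 ∧ V (-α) = 0 ∧ ∀ t, -α < t → t < α → 0 < V t)
    (hV3 : ∃ a₁ a₂ a₃ a₄ δ : ℝ, 0 < a₁ ∧ 0 < a₂ ∧ 0 < a₃ ∧ 0 < a₄ ∧ 0 < δ ∧ δ < α ∧
      (∀ t, α - δ < t → t ≤ α → a₁ * Phi φ |t - α| ≤ V t ∧ V t ≤ a₂ * Phi φ |t - α|) ∧
      (∀ t, -α ≤ t → t < -α + δ → a₃ * Phi φ |t + α| ≤ V t ∧ V t ≤ a₄ * Phi φ |t + α|))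
    (hV4 : ∃ k₁ k₂ k₃ k₄ k₅ k₆ k₇ k₈ : ℝ, 0 < k₁ ∧ 0 < k₂ ∧ 0 < k₃ ∧ 0 < k₄ ∧
      0 < k₅ ∧ 0 < k₆ ∧ 0 < k₇ ∧ 0 < k₈ ∧
      (∀ t, 0 ≤ t → t ≤ α →
        -(k₃ * t * φ (k₄ * |t - α|) * |t - α|) ≤ deriv V t ∧
        deriv V t ≤ -(k₁ * t * φ (k₂ * |t - α|) * |t - α|)) ∧
      (∀ t, -α ≤ t → t ≤ 0 →
        -(k₇ * t * φ (k₈ * |t + α|) * |t + α|) ≤ deriv V t ∧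
        deriv V t ≤ -(k₅ * t * φ (k₆ * |t + α|) * |t + α|)))
    (hV5 : ∃ ρ > 0, StrictConvexOn ℝ (Set.Ioo (-α - ρ) (-α + ρ)) V ∧
      StrictConvexOn ℝ (Set.Ioo (α - ρ) (α + ρ)) V)
    (hq : IsHeteroclinic φ V α q)
    (huniq : ∀ u : ℝ → ℝ, IsHeteroclinic φ V α u → u = q) :
    (∀ t, -α < t → t < α → V (-t) = V t) ↔ (∀ t : ℝ, q (-t) = -q t) := by
  obtain ⟨c₁, c₂, δ₀, r, hc₁, hc₂, hδ₀, hr, hφ3'⟩ := hφ3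
  obtain ⟨a₁, a₂, a₃, a₄, δ, ha₁, ha₂, ha₃, ha₄, hδ, hδα, hV3r, hV3l⟩ := hV3
  obtain ⟨hsol, hq2, hq2c, hq0, hqtop, hqbot⟩ := hq
  have hq1 : Differentiable ℝ q := hsol.1
  have hqcont : Continuous q := hq1.continuous
  have hφ2l : ∀ t > 0, l - 1 ≤ deriv (fun s => φ s * s) t / φ t := fun t ht => (hφ2 t ht).1
  have hφ3u : ∀ t : ℝ, 0 < t → t ≤ δ₀ → φ t * t ≤ c₂ * t ^ (r - 1) :=
    fun t h1 h2 => (hφ3' t h1 h2).2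
  have hE := energy_const hφC1 hφpos hφ1 hc₂ hδ₀ hr hφ3u hV1 hsol hq2
  set c : ℝ := hfun φ (deriv q 0) - V (q 0) with hcdef
  have hEc : ∀ t, hfun φ (deriv q t) - V (q t) = c := hE
  constructor
  · -- V even on (-α,α) → q odd
    intro hVe
    have hφ3l : ∀ t : ℝ, 0 < t → t ≤ δ₀ → c₁ * t ^ (r - 1) ≤ φ t * t :=
      fun t h1 h2 => (hφ3' t h1 h2).1
    set C₀ : ℝ := (l - 1) * c₁ / r with hC₀def
    have hC₀ : 0 < C₀ := div_pos (mul_pos (by linarith) hc₁) (by linarith)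
    have hhlow : ∀ s : ℝ, 0 ≤ s → s ≤ δ₀ → C₀ * s ^ r ≤ hfun φ s :=
      fun s h1 h2 => hfun_lower hφC1 hφpos hφ1 hl hφ2l hc₁ hc₂ hδ₀ hr hφ3' h1 h2
    have hhpos : ∀ s : ℝ, 0 < s → 0 < hfun φ s :=
      fun s h => hfun_pos hφC1 hφpos hφ1 hl hφ2l hc₁ hc₂ hδ₀ hr hφ3' h
    have hPhile : ∀ y : ℝ, 0 ≤ y → y ≤ δ₀ → Phi φ y ≤ c₂ * y ^ r / r :=
      fun y h1 h2 => Phi_le_rpow hφC1 hφpos hφ1 hc₂ hδ₀ hr hφ3u h1 h2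
    -- the solution stays strictly between -α and α
    have hrange : ∀ t, -α < q t ∧ q t < α := by
      by_contra hcon
      push_neg at hcon
      obtain ⟨t₀, ht₀⟩ := hcon
      have hcase : q t₀ ≤ -α ∨ α ≤ q t₀ := by
        rcases le_or_gt (q t₀) (-α) with h | h
        · exact Or.inl h
        · exact Or.inr (ht₀ h)
      -- c is nonnegative
      have hcge : 0 ≤ c := by
        have h1 : ∀ t, -V (q t) ≤ c := by
          intro t
          have h2 := hEc t
          have h3 : 0 ≤ hfun φ (deriv q t) := by
            rw [← hfun_abs]
            exact hfun_nonneg hφC1 hφpos hφ1 (abs_nonneg _)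
          linarith
        have h2 : Tendsto (fun t => -V (q t)) atTop (nhds (-V α)) :=
          ((hV1.continuous.tendsto α).comp hqtop).neg
        have h3 := le_of_tendsto h2 (Filter.Eventually.of_forall h1)
        rw [hV2.1] at h3
        linarith
      -- c = 0 and there is an extremal point beyond ±α
      have hkey : c = 0 ∧ ∃ tm, (α ≤ q tm ∨ q tm ≤ -α) := by
        rcases hcase with h | h
        · -- minimum side
          have hnegtop : Tendsto (fun t => -q t) atTop (nhds (-α)) := hqtop.neg
          have hnegbot : Tendsto (fun t => -q t) atBot (nhds α) := by
            have := hqbot.neg; rwa [neg_neg] at this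
          obtain ⟨tm, htm1, htm2⟩ := attain_max (q := fun t => -q t) hqcont.neg hnegtop hnegbot
            (t₀ := t₀) rfl (by linarith) (by linarith)
          have hloc : IsLocalMin q tm :=
            Filter.Eventually.of_forall (fun s => by have := htm2 s; linarith)
          have hd0 : deriv q tm = 0 := hloc.deriv_eq_zero
          have he := hEc tm
          rw [hd0, hfun_zero] at he
          have hVnonneg := hVnn (q tm)
          exact ⟨by linarith, ⟨tm, Or.inr (by linarith)⟩⟩
        · -- maximum side
          obtain ⟨tm, htm1, htm2⟩ := attain_max hqcont hqtop hqbot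
            (t₀ := t₀) rfl (by linarith) (by linarith)
          have hloc : IsLocalMax q tm := Filter.Eventually.of_forall htm2
          have hd0 : deriv q tm = 0 := hloc.deriv_eq_zero
          have he := hEc tm
          rw [hd0, hfun_zero] at he
          have hVnonneg := hVnn (q tm)
          exact ⟨by linarith, ⟨tm, Or.inl (by linarith)⟩⟩
      obtain ⟨hc0, tm, htm⟩ := hkey
      have hid : ∀ t, hfun φ (deriv q t) = V (q t) := by
        intro t; have := hEc t; rw [hc0] at this; linarith
      rcases htm with h | h
      · have htm0 : tm ≠ 0 := by intro hh; rw [hh, hq0] at h; linarith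
        refine no_touch' (W := V) hα ha₂ hδ hc₂ hδ₀ hr hC₀ hPhile hhlow hhpos hq1 hq2c
          hid hV2.1 ?_ hq0 htm0 h
        intro x h1 h2
        have h3 := (hV3r x h1 h2).2
        rwa [abs_of_nonpos (by linarith), neg_sub] at h3
      · have htm0 : tm ≠ 0 := by intro hh; rw [hh, hq0] at h; linarith
        have hnd : deriv (fun t => - q t) = fun t => - deriv q t :=
          funext fun t => deriv.neg
        refine no_touch' (u := fun t => - q t) (W := fun x => V (-x)) hα ha₄ hδ hc₂ hδ₀ hr hC₀
          hPhile hhlow hhpos hq1.neg ?_ ?_ (by simpa using hV2.2.1) ?_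
          (show -q 0 = 0 by rw [hq0, neg_zero]) htm0 (show α ≤ -q tm by linarith)
        · rw [hnd]; exact hq2c.neg
        · intro t
          show hfun φ (deriv (fun t => - q t) t) = V (-(-q t))
          rw [hnd]
          simp only
          rw [hfun_neg, hid t, neg_neg]
        · intro x h1 h2
          have h3 := (hV3l (-x) (by linarith) (by linarith)).2
          have habs : |(-x) + α| = α - x := by
            rw [abs_of_nonneg (by linarith)]; ring
          rw [habs] at h3
          exact h3
    -- oddness of deriv V on the open interval
    have hVodd : ∀ x : ℝ, -α < x → x < α → deriv V (-x) = - deriv V x := by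
      intro x h1 h2
      have heq : (fun t => V (-t)) =ᶠ[nhds x] V := by
        filter_upwards [Ioo_mem_nhds h1 h2] with y hy
        exact hVe y hy.1 hy.2
      have h3 : deriv (fun t => V (-t)) x = deriv V x := heq.deriv_eq
      rw [my_deriv_comp_neg V x] at h3
      linarith
    -- the reflected function
    set u : ℝ → ℝ := fun t => - q (-t) with hudef
    have hud : ∀ t, deriv u t = deriv q (-t) := by
      intro t
      have h1 : deriv u t = - deriv (fun s => q (-s)) t := deriv.neg
      rw [my_deriv_comp_neg q t] at h1
      rw [h1, neg_neg]
    have hus : Differentiable ℝ u := (hq1.comp differentiable_neg).neg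
    have hu2 : ∀ t, HasDerivAt (fun s => if deriv u s = 0 then 0 else φ |deriv u s| * deriv u s)
        (deriv V (u t)) t := by
      intro t
      have hfeq : (fun s => if deriv u s = 0 then 0 else φ |deriv u s| * deriv u s)
          = fun s => gfun φ (deriv q (-s)) := by
        funext s
        rw [show (if deriv u s = 0 then 0 else φ |deriv u s| * deriv u s)
          = gfun φ (deriv u s) from rfl, hud s]
      rw [hfeq]
      have hbase : HasDerivAt (fun s => gfun φ (deriv q s)) (deriv V (q (-t))) (-t) :=
        hsol.2 (-t)
      have hcomp : HasDerivAt (fun s => gfun φ (deriv q (-s)))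
          (deriv V (q (-t)) * (-1)) t := hbase.comp t (hasDerivAt_neg t)
      have hval : deriv V (u t) = deriv V (q (-t)) * (-1) := by
        have h4 := hVodd (q (-t)) (hrange (-t)).1 (hrange (-t)).2
        show deriv V (- q (-t)) = _
        rw [h4]; ring
      rw [hval]
      exact hcomp
    have huh : IsHeteroclinic φ V α u := by
      refine ⟨⟨hus, hu2⟩, ?_, ?_, ?_, ?_, ?_⟩
      · rw [show deriv u = fun t => deriv q (-t) from funext hud]
        exact hq2.comp differentiable_neg
      · rw [show deriv u = fun t => deriv q (-t) from funext hud]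
        exact hq2c.comp continuous_neg
      · show - q (-0) = 0
        rw [neg_zero, hq0, neg_zero]
      · have h1 : Tendsto (fun t : ℝ => q (-t)) atTop (nhds (-α)) :=
          hqbot.comp tendsto_neg_atTop_atBot
        have h2 := h1.neg
        rw [neg_neg] at h2
        exact h2
      · have h1 : Tendsto (fun t : ℝ => q (-t)) atBot (nhds α) :=
          hqtop.comp tendsto_neg_atBot_atTop
        exact h1.neg
    have hequ := huniq u huh
    intro t
    have h5 : u t = q t := congrFun hequ t
    have h6 : - q (-t) = q t := h5
    linarith
  · -- q odd → V even on (-α,α)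
    intro hodd
    have hqd : ∀ t, deriv q (-t) = deriv q t := by
      intro t
      have h1 : deriv (fun s => q (-s)) t = - deriv q (-t) := my_deriv_comp_neg q t
      have h2 : (fun s => q (-s)) = fun s => - q s := funext fun s => hodd s
      rw [h2, deriv.fun_neg] at h1
      linarith
    have hVq : ∀ t, V (- q t) = V (q t) := by
      intro t
      have e1 := hEc t
      have e2 := hEc (-t)
      rw [hqd t, hodd t] at e2
      linarith
    have key : ∀ x : ℝ, 0 ≤ x → x < α → V (-x) = V x := by
      intro x hx0 hxα
      obtain ⟨T, hT⟩ := ((hqtop.eventually (eventually_gt_nhds hxα)).and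
        (eventually_ge_atTop 0)).exists
      have hIcc : x ∈ Set.Icc (q 0) (q T) := by rw [hq0]; exact ⟨hx0, hT.1.le⟩
      obtain ⟨t, _, hqt⟩ := intermediate_value_Icc hT.2 hqcont.continuousOn hIcc
      rw [← hqt]
      exact hVq t
    intro x hx1 hx2
    rcases le_total 0 x with h | h
    · exact key x h hx2
    · have h1 := key (-x) (by linarith) (by linarith)
      rw [neg_neg] at h1
      exact h1.symm
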